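/- Fix an integer m ≥ 1, a unit vector a ∈ ℝ^m, a constant c with 0 ≤ c < 1, and b ∈ ℝ. Then the set S = { u ∈ ℝ^m : ⟨a, u⟩ + c·‖u‖ ≤ b } is nonempty and closed, and it has a unique element of minimum Euclidean norm, namely u* = 0 if b ≥ 0 and u* = (b/(1−c))·a if b < 0. -/
import Mathlib


open scoped RealInnerProductSpace

/-- The explicit minimum-norm solution of a single quadratically constrained problem
underlying the closed-form reference-tracking control law (49)–(50) of the paper:
the set `S = {u | ⟪a, u⟫ + c‖u‖ ≤ b}` (with `a` a unit vector, `0 ≤ c < 1`) is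
nonempty and closed, and its unique element of minimum norm is `0` if `b ≥ 0` and
`(b/(1−c)) • a` if `b < 0`. -/
theorem stmt13 (m : ℕ) (hm : 1 ≤ m)
    (a : EuclideanSpace ℝ (Fin m)) (ha : ‖a‖ = 1)
    (c b : ℝ) (hc0 : 0 ≤ c) (hc1 : c < 1) :
    let S : Set (EuclideanSpace ℝ (Fin m)) := {u | ⟪a, u⟫ + c * ‖u‖ ≤ b}
    let ustar : EuclideanSpace ℝ (Fin m) :=
      if 0 ≤ b then 0 else (b / (1 - c)) • a
    S.Nonempty ∧ IsClosed S ∧ ustar ∈ S ∧ (∀ u ∈ S, ‖ustar‖ ≤ ‖u‖) ∧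
      ∀ u ∈ S, ‖u‖ = ‖ustar‖ → u = ustar := by
  intro S ustar
  have h1c : (0:ℝ) < 1 - c := by linarith
  have hclosed : IsClosed S := by
    have hcont : Continuous fun u : EuclideanSpace ℝ (Fin m) => ⟪a, u⟫ + c * ‖u‖ :=
      ((continuous_const.inner continuous_id).add (continuous_const.mul continuous_norm))
    exact isClosed_Iic.preimage hcont
  have hmem : ustar ∈ S := by
    unfold ustar S
    split_ifs with hb
    · simp [hb]
    · have hb' : b < 0 := lt_of_not_ge hb
      simp only [Set.mem_setOf_eq, real_inner_smul_right, real_inner_self_eq_norm_sq,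
        norm_smul, ha]
      have : ‖b / (1 - c)‖ = -(b / (1 - c)) := by
        rw [Real.norm_eq_abs, abs_of_neg (div_neg_of_neg_of_pos hb' h1c)]
      rw [this]
      have heq : b / (1 - c) * 1 ^ 2 + c * (-(b / (1 - c)) * 1) = b := by
        field_simp; ring
      linarith
  have hnorm : ‖ustar‖ = if 0 ≤ b then 0 else -b / (1 - c) := by
    unfold ustar
    split_ifs with hb
    · simp
    · have hb' : b < 0 := lt_of_not_ge hb
      rw [norm_smul, ha, Real.norm_eq_abs, abs_of_neg (div_neg_of_neg_of_pos hb' h1c)]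
      ring
  have hlb : ∀ u ∈ S, ‖ustar‖ ≤ ‖u‖ := by
    intro u hu
    rw [hnorm]
    split_ifs with hb
    · exact norm_nonneg u
    · have hb' : b < 0 := lt_of_not_ge hb
      have hcs : -(‖a‖ * ‖u‖) ≤ ⟪a, u⟫ := neg_le_of_neg_le (by
        have := abs_real_inner_le_norm a u
        linarith [neg_abs_le (⟪a, u⟫ : ℝ)])
      rw [ha] at hcs
      have hSu : ⟪a, u⟫ + c * ‖u‖ ≤ b := hu
      rw [div_le_iff₀ h1c] at *
      nlinarith
  refine ⟨⟨ustar, hmem⟩, hclosed, hmem, hlb, ?_⟩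
  intro u hu hun
  rw [hnorm] at hun
  unfold ustar
  split_ifs at hun ⊢ with hb
  · exact norm_eq_zero.mp hun
  · have hb' : b < 0 := lt_of_not_ge hb
    have hSu : ⟪a, u⟫ + c * ‖u‖ ≤ b := hu
    have hd : (-b / (1 - c)) * (1 - c) = -b := div_mul_cancel₀ _ h1c.ne'
    have hin : ⟪a, u⟫ ≤ -‖u‖ := by
      rw [hun] at hSu ⊢
      nlinarith
    have hcs : -(‖a‖ * ‖u‖) ≤ ⟪a, u⟫ := by
      have := abs_real_inner_le_norm a u
      linarith [neg_abs_le (⟪a, u⟫ : ℝ)]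
    rw [ha, one_mul] at hcs
    have heq : ⟪a, -u⟫ = ‖a‖ * ‖-u‖ := by
      rw [inner_neg_right, ha, one_mul, norm_neg]; linarith
    have := (inner_eq_norm_mul_iff_real).mp heq
    rw [norm_neg, ha, one_smul] at this
    have : u = -(‖u‖ • a) := by
      rw [this, neg_neg]
    rw [this, hun]
    rw [← neg_smul]
    congr 1
    field_simp
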